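/- Let p : E → X be a smooth surjective submersion of smooth manifolds, r ≥ 2, f ∈ C^1(E), and define F : E^r_X → ℝ by F(u_1,...,u_r) = Σ_{i=1}^r f(u_i). Suppose f satisfies condition (A): whenever u is a critical point of the restriction of f to the fiber p^{-1}({p(u)}), then u is a critical point of f. Then Crit F = {(u_1,...,u_r) ∈ E^r_X : u_i ∈ Crit f for all i} = Crit f ×_X Crit f ×_X ... ×_X Crit f. -/
import Mathlib


theorem stmt14 {E X : Type*} [NormedAddCommGroup E] [NormedSpace ℝ E]
    [NormedAddCommGroup X] [NormedSpace ℝ X]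
    (r : ℕ) (hr : 2 ≤ r)
    (p : E → X) (hp : Differentiable ℝ p)
    (hsurj : ∀ e : E, Function.Surjective (fderiv ℝ p e))
    (f : E → ℝ) (hf : Differentiable ℝ f)
    -- condition (A): critical points of `f` restricted to fibers are critical for `f`:
    (hA : ∀ e : E, (∀ v, fderiv ℝ p e v = 0 → fderiv ℝ f e v = 0) → fderiv ℝ f e = 0)
    (u : Fin r → E) (hu : ∀ i j, p (u i) = p (u j)) :
    -- `u` is a critical point of `F = Σ f(u_i)` on `E^r_X` …
    (∀ v : Fin r → E,
        (∀ i j, fderiv ℝ p (u i) (v i) = fderiv ℝ p (u j) (v j)) →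
        ∑ i, fderiv ℝ f (u i) (v i) = 0)
      -- … iff every `u i` is a critical point of `f`:
      ↔ ∀ i, fderiv ℝ f (u i) = 0 := by
  constructor
  · intro h i
    apply hA
    intro v hv
    have hw := h (fun j => if j = i then v else 0) ?_
    · rw [Finset.sum_eq_single i] at hw
      · simpa using hw
      · intro j _ hj; simp [hj]
      · simp
    · intro j k
      by_cases hj : j = i <;> by_cases hk : k = i <;> simp [hj, hk, hv]
  · intro h v _
    simp [h]
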